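/- The formal power series G(x) = ∑_{n≥0} P_n^3 x^n over ℚ satisfies (1+2x−x^2)(1−14x−x^2) · G(x) = x(1−4x−x^2). -/

import Mathlib

open PowerSeries

def pell : ℕ → ℚ
  | 0 => 0
  | 1 => 1
  | n + 2 => 2 * pell (n + 1) + pell n

lemma pell_cube_rec (n : ℕ) :
    pell (n+4) ^ 3 - 12 * pell (n+3) ^ 3 - 30 * pell (n+2) ^ 3
      + 12 * pell (n+1) ^ 3 + pell n ^ 3 = 0 := by
  simp only [pell]
  ring

theorem pell_cube_genfun :
    (1 + 2 * X - X ^ 2) * (1 - 14 * X - X ^ 2) * PowerSeries.mk (fun n => pell n ^ 3)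
      = X * (1 - 4 * X - X ^ 2) := by
  set f : ℚ⟦X⟧ := PowerSeries.mk (fun n => pell n ^ 3) with hf
  have c12 : (C (R := ℚ)) 12 = (12 : ℚ⟦X⟧) := by exact map_ofNat _ _
  have c30 : (C (R := ℚ)) 30 = (30 : ℚ⟦X⟧) := by exact map_ofNat _ _
  have c4 : (C (R := ℚ)) 4 = (4 : ℚ⟦X⟧) := by exact map_ofNat _ _
  have h : (1 + 2 * X - X ^ 2) * (1 - 14 * X - X ^ 2) * f
      = f - C (R := ℚ) 12 * (f * X) - C (R := ℚ) 30 * (f * X^2) + C (R := ℚ) 12 * (f * X^3) + f * X^4 := by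
    rw [c12, c30]; ring
  have h2 : (X : ℚ⟦X⟧) * (1 - 4 * X - X ^ 2) = X - C (R := ℚ) 4 * X^2 - X^3 := by
    rw [c4]; ring
  rw [h, h2]
  ext n
  simp only [map_add, map_sub, coeff_C_mul, coeff_mul_X_pow', coeff_X, coeff_X_pow,
    PowerSeries.coeff_mk, hf]
  match n with
  | 0 => norm_num [pell]
  | 1 => norm_num [pell]
  | 2 => norm_num [pell]
  | 3 => norm_num [pell]
  | (n+4) =>
    have := pell_cube_rec n
    simp only [coeff_C, if_neg (show ¬(n+4=1) by omega), if_neg (show ¬(n+2=0) by omega),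
      if_neg (show ¬(n+4=3) by omega)]
    norm_num
    simp only [show n+4-1 = n+3 by omega, show n+4-2 = n+2 by omega,
      show n+4-3 = n+1 by omega, show n+4-4 = n by omega]
    rw [if_neg (show ¬(n+2=0) by omega)]
    linarith
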